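/- Let M be a nonzero closed subspace of H with T_{α,β} M ⊆ M. Then there exists a nonzero closed subspace N ⊆ M such that every x ∈ N has vanishing zeroth coordinate (⟨x, e_0⟩ = 0) and T_{α,β} N ⊆ N. (In the Hardy-space picture this says M contains z²θH²(𝔻) for some inner function θ.) -/

import Mathlib

open scoped ComplexConjugate

noncomputable section

/-- The Hilbert space `H = ℓ²(ℕ, ℂ)`. -/
abbrev H : Type := lp (fun _ : ℕ => ℂ) 2

/-- The standard orthonormal basis vectors of `ℓ²(ℕ, ℂ)`. -/
noncomputable def e (n : ℕ) : H := lp.single 2 n (1 : ℂ)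


lemma inner_e_apply (n : ℕ) (x : H) : (inner ℂ (e n) x : ℂ) = x n := by
  rw [e, lp.inner_single_left]; simp [RCLike.inner_apply]

lemma inner_e_e (n m : ℕ) : (inner ℂ (e n) (e m) : ℂ) = if n = m then 1 else 0 := by
  rw [e, lp.inner_single_left]
  simp [e, lp.single_apply, Pi.single_apply, RCLike.inner_apply, eq_comm]

lemma key (α β : ℂ) (T : H →L[ℂ] H)
    (hT0 : T (e 0) = (α * conj β) • e 0 + β • e 1)
    (hTn : ∀ n : ℕ, 1 ≤ n → T (e n) = e (n + 1)) (x : H) (n : ℕ) :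
    (inner ℂ (e n) (T x) : ℂ) =
      if n = 0 then α * conj β * x 0 else if n = 1 then β * x 0 else x (n - 1) := by
  have h1 : HasSum (fun i => lp.single 2 i (x i)) x := lp.hasSum_single (by norm_num) x
  have h2 : HasSum (fun i => ((innerSL ℂ (e n)).comp T) (lp.single 2 i (x i)))
      (((innerSL ℂ (e n)).comp T) x) := (ContinuousLinearMap.hasSum _ h1)
  have hsingle : ∀ i : ℕ, lp.single 2 i (x i) = (x i) • e i := by
    intro i; rw [e, ← lp.single_smul]; norm_num
  have hval : ∀ i : ℕ, (inner ℂ (e n) (T (e i)) : ℂ) =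
      if i = 0 then (if n = 0 then α * conj β else if n = 1 then β else 0)
      else (if n = i + 1 then 1 else 0) := by
    intro i
    rcases Nat.eq_zero_or_pos i with hi | hi
    · subst hi
      rw [hT0, inner_add_right, inner_smul_right, inner_smul_right, inner_e_e, inner_e_e]
      rcases n with _ | _ | m <;> simp
    · rw [hTn i hi, inner_e_e]; simp [Nat.pos_iff_ne_zero.mp hi]
  have h2' : HasSum (fun i : ℕ => (x i : ℂ) *
      (if i = 0 then (if n = 0 then α * conj β else if n = 1 then β else 0)
      else (if n = i + 1 then 1 else 0))) ((inner ℂ (e n) (T x) : ℂ)) := by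
    have := h2
    simp only [ContinuousLinearMap.comp_apply, innerSL_apply_apply, hsingle, map_smul,
      inner_smul_right, smul_eq_mul, hval] at this
    exact this
  rcases n with _ | _ | m
  · have hz : ∀ i : ℕ, i ≠ 0 → ((x i : ℂ) *
        (if i = 0 then (α * conj β) else (if (0:ℕ) = i + 1 then 1 else 0))) = 0 := by
      intro i hi; simp [hi]
    have := h2'.unique (hasSum_single (f := fun i : ℕ => (x i : ℂ) *
        (if i = 0 then (α * conj β) else (if (0:ℕ) = i + 1 then 1 else 0))) 0 (by
      intro i hi; simp [hi]))
    simpa [mul_comm] using this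
  · have := h2'.unique (hasSum_single (f := fun i : ℕ => (x i : ℂ) *
        (if i = 0 then β else (if (1:ℕ) = i + 1 then 1 else 0))) 0 (by
      intro i hi; simp [hi]))
    simpa [mul_comm] using this
  · have := h2'.unique (hasSum_single (f := fun i : ℕ => (x i : ℂ) *
        (if i = 0 then (0:ℂ) else (if (m+2:ℕ) = i + 1 then 1 else 0))) (m+1) (by
      intro i hi
      rcases eq_or_ne i 0 with h0 | h0
      · simp [h0]
      · simp [h0]
        intro hcon; omega))
    simpa using this

/-- Every nonzero closed `T_{α,β}`-invariant subspace `M` contains a nonzero closed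
invariant subspace `N` all of whose elements have vanishing zeroth coordinate. -/
theorem invariant_subspace_contains_shift_invariant (α β : ℂ) (hα : α ≠ 0) (hβ : β ≠ 0)
    (hnorm : ‖α‖ ^ 2 + ‖β‖ ^ 2 = 1)
    (T : H →L[ℂ] H)
    (hT0 : T (e 0) = (α * conj β) • e 0 + β • e 1)
    (hTn : ∀ n : ℕ, 1 ≤ n → T (e n) = e (n + 1))
    (M : Submodule ℂ H) (hMcl : IsClosed (M : Set H)) (hMne : M ≠ ⊥)
    (hMinv : ∀ x ∈ M, T x ∈ M) :
    ∃ N : Submodule ℂ H, IsClosed (N : Set H) ∧ N ≠ ⊥ ∧ N ≤ M ∧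
      (∀ x ∈ N, (inner ℂ x (e 0) : ℂ) = 0) ∧ (∀ x ∈ N, T x ∈ N) := by
  set c : ℂ := α * conj β with hc_def
  have hc : c ≠ 0 := mul_ne_zero hα (by simpa using hβ)
  have habs : ‖c‖ ≤ 1 / 2 := by
    have h1 : ‖c‖ = ‖α‖ * ‖β‖ := by
      rw [hc_def, norm_mul, Complex.norm_conj]
    nlinarith [norm_nonneg α, norm_nonneg β, sq_nonneg (‖α‖ - ‖β‖)]
  set N : Submodule ℂ H := M ⊓ LinearMap.ker (innerSL ℂ (e 0) : H →ₗ[ℂ] ℂ) with hN_def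
  have hmemN : ∀ x : H, x ∈ N ↔ x ∈ M ∧ (inner ℂ (e 0) x : ℂ) = 0 := by
    intro x
    simp [hN_def, Submodule.mem_inf, LinearMap.mem_ker]
  refine ⟨N, ?_, ?_, inf_le_left, ?_, ?_⟩
  · have : (N : Set H) = (M : Set H) ∩ (LinearMap.ker (innerSL ℂ (e 0) : H →ₗ[ℂ] ℂ) : Set H) := rfl
    rw [this]
    exact hMcl.inter (ContinuousLinearMap.isClosed_ker _)
  · -- N ≠ ⊥
    intro hbot
    obtain ⟨x, hxM, hxne⟩ := Submodule.exists_mem_ne_zero_of_ne_bot hMne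
    have hNzero : ∀ z : H, z ∈ M → (inner ℂ (e 0) z : ℂ) = 0 → z = 0 := by
      intro z hzM hz0
      have : z ∈ N := (hmemN z).mpr ⟨hzM, hz0⟩
      rw [hbot] at this
      simpa using this
    have hx0 : (x 0 : ℂ) ≠ 0 := by
      intro h
      exact hxne (hNzero x hxM (by rw [inner_e_apply]; exact h))
    -- T x = c • x
    have heig : T x = c • x := by
      have hyM : T x - c • x ∈ M := Submodule.sub_mem M (hMinv x hxM) (Submodule.smul_mem M c hxM)
      have hy0 : (inner ℂ (e 0) (T x - c • x) : ℂ) = 0 := by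
        rw [inner_sub_right, inner_smul_right, key α β T hT0 hTn, inner_e_apply]
        simp [hc_def]
      have := hNzero _ hyM hy0
      linear_combination (norm := module) this
    have hcoord : ∀ n : ℕ, (inner ℂ (e n) (T x) : ℂ) = c * x n := by
      intro n
      rw [heig, inner_smul_right, inner_e_apply]
    have h1 : β * x 0 = c * x 1 := by
      have := hcoord 1
      rw [key α β T hT0 hTn] at this
      simpa using this
    have hx1 : (x 1 : ℂ) ≠ 0 := by
      intro h
      rw [h, mul_zero] at h1
      exact hβ (by simpa [hx0] using mul_eq_zero.mp h1)
    have hrec : ∀ m : ℕ, (x (m + 1) : ℂ) = c * x (m + 2) := by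
      intro m
      have := hcoord (m + 2)
      rw [key α β T hT0 hTn] at this
      simpa using this
    have hgrow : ∀ m : ℕ, 2 ^ m * ‖x 1‖ ≤ ‖x (m + 1)‖ := by
      intro m
      induction m with
      | zero => simp
      | succ k ih =>
        have h2 : ‖x (k + 1)‖ = ‖c‖ * ‖x (k + 2)‖ := by
          rw [← norm_mul, ← hrec k]
        have hcnn : (0:ℝ) ≤ ‖x (k + 2)‖ := norm_nonneg _
        have : ‖x (k + 1)‖ ≤ (1/2) * ‖x (k + 2)‖ := by
          rw [h2]; exact mul_le_mul_of_nonneg_right habs hcnn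
        calc 2 ^ (k+1) * ‖x 1‖ = 2 * (2 ^ k * ‖x 1‖) := by ring
          _ ≤ 2 * ‖x (k + 1)‖ := by linarith
          _ ≤ ‖x (k + 2)‖ := by linarith
    have hbound : ∀ m : ℕ, ‖x (m + 1)‖ ≤ ‖x‖ := by
      intro m
      have := lp.norm_apply_le_norm (by norm_num : (2 : ENNReal) ≠ 0) x (m + 1)
      simpa using this
    obtain ⟨m, hm⟩ := pow_unbounded_of_one_lt (‖x‖ / ‖x 1‖) (by norm_num : (1:ℝ) < 2)
    have hx1pos : 0 < ‖x 1‖ := norm_pos_iff.mpr hx1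
    have : ‖x‖ < 2 ^ m * ‖x 1‖ := by
      rw [div_lt_iff₀ hx1pos] at hm
      linarith
    linarith [hgrow m, hbound m]
  · intro x hx
    have := ((hmemN x).mp hx).2
    rw [← inner_conj_symm, this, map_zero]
  · intro x hx
    obtain ⟨hxM, hx0⟩ := (hmemN x).mp hx
    refine (hmemN _).mpr ⟨hMinv x hxM, ?_⟩
    rw [key α β T hT0 hTn]
    rw [inner_e_apply] at hx0
    simp [hx0]

end
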